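/- For n ≥ 2, define an action of the group G = (ℤ/2)^{n-1} on the product (S²)^n (where S² is the unit sphere in ℝ³) as follows: the element a = (a₁,…,a_{n-1}) ∈ G sends (x₁,…,x_n) to the point whose j-th coordinate is (−1)^{a_{j-1}+a_j} x_j, with the convention a₀ = a_n = 0. (Equivalently, the i-th standard generator of G acts by the antipodal map on the i-th and (i+1)-st sphere factors and by the identity on all other factors.) Then this is a well-defined free action of G on (S²)^n by diffeomorphisms, and it commutes with every action of the torus T^n = (S^1)^n on (S²)^n by coordinatewise orthogonal linear transformations. -/

import Mathlib

open scoped Manifold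

/-- The product `(S²)^n` of `n` copies of the unit 2-sphere in `ℝ³`. -/
abbrev SphereProd (n : ℕ) : Type :=
  Fin n → Metric.sphere (0 : EuclideanSpace ℝ (Fin 3)) 1

/-- `(-1)^c` for `c : ZMod 2`. -/
def signOf (c : ZMod 2) : ℝ := if c = 0 then 1 else -1

theorem abs_signOf (c : ZMod 2) : |signOf c| = 1 := by
  unfold signOf; split <;> norm_num

/-- The extension of `a : (ℤ/2)^{n-1}` (indexed by `1, …, n-1`) to all of `ℕ` by zero;
`extCoef n a i` is the `a_i` of the statement, with `a_0 = a_n = 0`. -/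
def extCoef (n : ℕ) (a : Fin (n - 1) → ZMod 2) (i : ℕ) : ZMod 2 :=
  if h : 1 ≤ i ∧ i ≤ n - 1 then a ⟨i - 1, by omega⟩ else 0

/-- The action of `a ∈ (ℤ/2)^{n-1}` on `(S²)^n` sending `(x₁, …, x_n)` to the point whose
`j`-th coordinate is `(-1)^{a_{j-1} + a_j} x_j` (with `a_0 = a_n = 0`); here `j : Fin n`
denotes the `(j+1)`-st coordinate. -/
noncomputable def flipAct (n : ℕ) (a : Fin (n - 1) → ZMod 2) (x : SphereProd n) : SphereProd n :=
  fun j => ⟨signOf (extCoef n a (j : ℕ) + extCoef n a ((j : ℕ) + 1)) •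
      (x j : EuclideanSpace ℝ (Fin 3)), by
    rw [mem_sphere_zero_iff_norm, norm_smul, Real.norm_eq_abs, abs_signOf,
      mem_sphere_zero_iff_norm.mp (x j).2, one_mul]⟩

/-- The coordinatewise action of the torus `(S¹)^n` on `(S²)^n` associated to a family of
continuous homomorphisms `S¹ → O(3)`, the orthogonal transformations of `ℝ³` being realized
as linear isometric equivalences. -/
noncomputable def torusAct (n : ℕ)
    (ρ : ∀ _ : Fin n, Circle →* (EuclideanSpace ℝ (Fin 3) ≃ₗᵢ[ℝ] EuclideanSpace ℝ (Fin 3)))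
    (t : Fin n → Circle) (x : SphereProd n) : SphereProd n :=
  fun j => ⟨ρ j (t j) (x j : EuclideanSpace ℝ (Fin 3)), by
    rw [mem_sphere_zero_iff_norm, LinearIsometryEquiv.norm_map]
    exact mem_sphere_zero_iff_norm.mp (x j).2⟩


section Aux

theorem contMDiff_piMap {ι : Type*} [Fintype ι]
    {E : ι → Type*} [∀ i, NormedAddCommGroup (E i)] [∀ i, NormedSpace ℝ (E i)]
    {H : ι → Type*} [∀ i, TopologicalSpace (H i)]
    (I : ∀ i, ModelWithCorners ℝ (E i) (H i))
    {M : ι → Type*} [∀ i, TopologicalSpace (M i)] [∀ i, ChartedSpace (H i) (M i)]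
    (g : ∀ i, M i → M i) (hg : ∀ i, ContMDiff (I i) (I i) ⊤ (g i)) :
    ContMDiff (ModelWithCorners.pi I) (ModelWithCorners.pi I) ⊤
      (fun x : ∀ i, M i => fun i => g i (x i)) := by
  intro x
  rw [contMDiffAt_iff]
  refine ⟨(continuous_pi fun i => (hg i).continuous.comp (continuous_apply i)).continuousAt, ?_⟩
  apply contDiffWithinAt_pi.2
  intro i
  have h := (hg i) (x i)
  rw [contMDiffAt_iff] at h
  have h2 := h.2
  have key : ContDiffWithinAt ℝ (⊤ : WithTop ℕ∞)
      ((extChartAt (I i) (g i (x i)) ∘ g i ∘ (extChartAt (I i) (x i)).symm) ∘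
        (fun y : ∀ j, E j => y i))
      (Set.range (ModelWithCorners.pi I)) (extChartAt (ModelWithCorners.pi I) x x) := by
    refine ContDiffWithinAt.comp (t := Set.range (I i)) _ h2
      ((ContinuousLinearMap.proj (R := ℝ) (φ := E) i).contDiff.contDiffWithinAt) ?_
    rintro y ⟨z, rfl⟩
    exact ⟨z i, rfl⟩
  exact key

theorem extCoef_zero (n : ℕ) (i : ℕ) : extCoef n 0 i = 0 := by
  unfold extCoef; split <;> rfl

theorem extCoef_add (n : ℕ) (a b : Fin (n - 1) → ZMod 2) (i : ℕ) :
    extCoef n (a + b) i = extCoef n a i + extCoef n b i := by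
  unfold extCoef; split <;> simp

theorem signOf_add (c d : ZMod 2) : signOf (c + d) = signOf c * signOf d := by
  have h : (1 + 1 : ZMod 2) = 0 := rfl
  have h' : (1 : ZMod 2) ≠ 0 := by decide
  have hc : ∀ e : ZMod 2, e = 0 ∨ e = 1 := by decide
  rcases hc c with rfl | rfl <;> rcases hc d with rfl | rfl <;> simp [signOf, h, h']

theorem contMDiff_signSmul (c : ℝ) (hc : |c| = 1) :
    ContMDiff (𝓡 2) (𝓡 2) ⊤
      (fun p : Metric.sphere (0 : EuclideanSpace ℝ (Fin 3)) 1 =>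
        (⟨c • (p : EuclideanSpace ℝ (Fin 3)), by
          rw [mem_sphere_zero_iff_norm, norm_smul, Real.norm_eq_abs, hc,
            mem_sphere_zero_iff_norm.mp p.2, one_mul]⟩ :
          Metric.sphere (0 : EuclideanSpace ℝ (Fin 3)) 1)) := by
  haveI : Fact (Module.finrank ℝ (EuclideanSpace ℝ (Fin 3)) = 2 + 1) :=
    Fact.mk (finrank_euclideanSpace_fin)
  exact ContMDiff.codRestrict_sphere
    (((contMDiff_const : ContMDiff (𝓡 2) 𝓘(ℝ, ℝ) ⊤
      (fun _ : Metric.sphere (0 : EuclideanSpace ℝ (Fin 3)) 1 => c)).smul (contMDiff_coe_sphere (E := EuclideanSpace ℝ (Fin 3)) (n := 2)))) _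

theorem flipAct_zero (n : ℕ) (x : SphereProd n) : flipAct n 0 x = x := by
  funext j
  apply Subtype.ext
  show signOf (extCoef n 0 (j : ℕ) + extCoef n 0 ((j : ℕ) + 1)) •
      (x j : EuclideanSpace ℝ (Fin 3)) = _
  rw [extCoef_zero, extCoef_zero, add_zero]
  show (1 : ℝ) • _ = _
  rw [one_smul]

theorem flipAct_add (n : ℕ) (a b : Fin (n - 1) → ZMod 2) (x : SphereProd n) :
    flipAct n (a + b) x = flipAct n a (flipAct n b x) := by
  funext j
  apply Subtype.ext
  show signOf (extCoef n (a + b) (j : ℕ) + extCoef n (a + b) ((j : ℕ) + 1)) •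
      (x j : EuclideanSpace ℝ (Fin 3)) =
    signOf (extCoef n a (j : ℕ) + extCoef n a ((j : ℕ) + 1)) •
      (signOf (extCoef n b (j : ℕ) + extCoef n b ((j : ℕ) + 1)) •
        (x j : EuclideanSpace ℝ (Fin 3)))
  rw [smul_smul, ← signOf_add]
  congr 1
  rw [extCoef_add, extCoef_add]
  ring_nf

end Aux

/-- **Theorem.** For `n ≥ 2`, the maps `flipAct n a` define a free action of `(ℤ/2)^{n-1}`
on `(S²)^n` by diffeomorphisms, and this action commutes with every action of the torus
`(S¹)^n` on `(S²)^n` by coordinatewise orthogonal linear transformations. -/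
theorem flipAct_is_free_action_by_diffeomorphisms_commuting_with_torus
    (n : ℕ) (hn : 2 ≤ n) :
    (∀ x : SphereProd n, flipAct n 0 x = x) ∧
    (∀ (a b : Fin (n - 1) → ZMod 2) (x : SphereProd n),
      flipAct n (a + b) x = flipAct n a (flipAct n b x)) ∧
    (∀ a : Fin (n - 1) → ZMod 2, a ≠ 0 → ∀ x : SphereProd n, flipAct n a x ≠ x) ∧
    (∀ a : Fin (n - 1) → ZMod 2,
      ∃ D : Diffeomorph (ModelWithCorners.pi fun _ : Fin n => 𝓡 2)
        (ModelWithCorners.pi fun _ : Fin n => 𝓡 2) (SphereProd n) (SphereProd n) ⊤,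
        ∀ x : SphereProd n, D x = flipAct n a x) ∧
    (∀ (ρ : ∀ _ : Fin n,
        Circle →* (EuclideanSpace ℝ (Fin 3) ≃ₗᵢ[ℝ] EuclideanSpace ℝ (Fin 3))),
      (∀ j, Continuous fun p : Circle × EuclideanSpace ℝ (Fin 3) => ρ j p.1 p.2) →
      ∀ (a : Fin (n - 1) → ZMod 2) (t : Fin n → Circle) (x : SphereProd n),
        flipAct n a (torusAct n ρ t x) = torusAct n ρ t (flipAct n a x)) := by
  constructor
  · exact flipAct_zero n
  refine ⟨flipAct_add n, ?_, ?_, ?_⟩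
  · -- freeness
    intro a ha x heq
    obtain ⟨i, hi⟩ := Function.ne_iff.mp ha
    have hkey : ∃ j : ℕ, j < n ∧ extCoef n a j ≠ extCoef n a (j + 1) := by
      by_contra h
      push_neg at h
      have hzero : ∀ k, k ≤ n → extCoef n a k = 0 := by
        intro k
        induction k with
        | zero => intro _; unfold extCoef; rw [dif_neg]; omega
        | succ m ih =>
          intro hm
          rw [← h m (by omega), ih (by omega)]
      have h1 : extCoef n a ((i : ℕ) + 1) = a i := by
        unfold extCoef
        rw [dif_pos ⟨by omega, by omega⟩]
        congr 1
      have := hzero ((i : ℕ) + 1) (by have := i.isLt; omega)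
      rw [h1] at this
      exact hi this
    obtain ⟨j, hj, hne⟩ := hkey
    have hxj := congrFun heq ⟨j, hj⟩
    have hco := congrArg (Subtype.val) hxj
    have hsum : extCoef n a j + extCoef n a (j + 1) ≠ 0 := by
      intro h0
      exact hne (by
        have : ∀ c d : ZMod 2, c + d = 0 → c = d := by decide
        exact this _ _ h0)
    have hsign : signOf (extCoef n a j + extCoef n a (j + 1)) = -1 := by
      unfold signOf; rw [if_neg hsum]
    change signOf (extCoef n a j + extCoef n a (j + 1)) •
      (x ⟨j, hj⟩ : EuclideanSpace ℝ (Fin 3)) = _ at hco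
    rw [hsign, neg_one_smul] at hco
    have hzero : (x ⟨j, hj⟩ : EuclideanSpace ℝ (Fin 3)) = 0 := by
      have h2 : (2 : ℝ) • (x ⟨j, hj⟩ : EuclideanSpace ℝ (Fin 3)) = 0 := by
        rw [two_smul]
        nth_rewrite 1 [← hco]
        exact neg_add_cancel _
      have := smul_eq_zero.mp h2
      rcases this with h | h
      · norm_num at h
      · exact h
    have := mem_sphere_zero_iff_norm.mp (x ⟨j, hj⟩).2
    rw [hzero, norm_zero] at this
    norm_num at this
  · -- diffeomorphism
    intro a
    have hsm : ContMDiff (ModelWithCorners.pi fun _ : Fin n => 𝓡 2)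
        (ModelWithCorners.pi fun _ : Fin n => 𝓡 2) ⊤ (flipAct n a) := by
      exact contMDiff_piMap (M := fun _ : Fin n => Metric.sphere (0 : EuclideanSpace ℝ (Fin 3)) 1) (fun _ : Fin n => 𝓡 2)
        (fun j p => ⟨signOf (extCoef n a (j : ℕ) + extCoef n a ((j : ℕ) + 1)) •
            (p : EuclideanSpace ℝ (Fin 3)), by
          rw [mem_sphere_zero_iff_norm, norm_smul, Real.norm_eq_abs, abs_signOf,
            mem_sphere_zero_iff_norm.mp p.2, one_mul]⟩)
        (fun j => contMDiff_signSmul _ (abs_signOf _))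
    have haa : a + a = 0 := by
      funext i
      show a i + a i = 0
      have : ∀ c : ZMod 2, c + c = 0 := by decide
      exact this _
    have hinv : ∀ x : SphereProd n, flipAct n a (flipAct n a x) = x := by
      intro x
      rw [← flipAct_add, haa, flipAct_zero]
    refine ⟨⟨⟨flipAct n a, flipAct n a, hinv, hinv⟩, hsm, hsm⟩, fun x => rfl⟩
  · -- commutes with torus actions
    intro ρ _ a t x
    funext j
    apply Subtype.ext
    show signOf (extCoef n a (j : ℕ) + extCoef n a ((j : ℕ) + 1)) •
        (ρ j (t j) (x j : EuclideanSpace ℝ (Fin 3))) =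
      ρ j (t j) (signOf (extCoef n a (j : ℕ) + extCoef n a ((j : ℕ) + 1)) •
        (x j : EuclideanSpace ℝ (Fin 3)))
    rw [map_smul]
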